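/- Let P ⊆ ℝ² be a lattice polygon and let u ∈ ℤ² be primitive. Suppose L is a u-lattice line that passes through an extreme point (vertex) of P and satisfies vol(L ∩ P) ≥ vol(L' ∩ P) for every u-lattice line L', where vol denotes the Euclidean length of the chord. Then L is a u-lattice diameter line of P, i.e., |L ∩ P ∩ ℤ²| ≥ |L' ∩ P ∩ ℤ²| for every u-lattice line L'. -/

import Mathlib

/-- The coordinatewise embedding of `ℤ²` into the Euclidean plane. -/
def toE (z : Fin 2 → ℤ) : EuclideanSpace ℝ (Fin 2) := WithLp.toLp 2 (fun i => (z i : ℝ))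

/-- The set of lattice points of the Euclidean plane. -/
def latE : Set (EuclideanSpace ℝ (Fin 2)) := Set.range toE

/-- The `u`-lattice line through the lattice point `z` in direction `u`. -/
def uline (z u : Fin 2 → ℤ) : Set (EuclideanSpace ℝ (Fin 2)) :=
  {p | ∃ t : ℝ, p = toE z + t • toE u}

lemma toE_apply (z : Fin 2 → ℤ) (i : Fin 2) : toE z i = (z i : ℝ) := rfl

lemma toE_inj : Function.Injective toE := by
  intro a b h
  funext i
  have : ((a i : ℝ)) = ((b i : ℝ)) := congrArg (fun p : EuclideanSpace ℝ (Fin 2) => p i) h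
  exact_mod_cast this

lemma prim_int (u : Fin 2 → ℤ) (hu : Finset.univ.gcd u = 1) (t : ℝ)
    (c : Fin 2 → ℤ) (h : ∀ i, t * (u i : ℝ) = (c i : ℝ)) : ∃ n : ℤ, t = (n : ℝ) := by
  have hg : IsCoprime (u 0) (u 1) := by
    rw [Int.isCoprime_iff_gcd_eq_one]
    have h0 : (Int.gcd (u 0) (u 1) : ℤ) ∣ Finset.univ.gcd u := by
      refine Finset.dvd_gcd (fun i _ => ?_)
      fin_cases i
      · exact Int.gcd_dvd_left _ _
      · exact Int.gcd_dvd_right _ _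
    rw [hu] at h0
    exact Nat.dvd_one.mp (by exact_mod_cast h0)
  obtain ⟨x, y, hxy⟩ := hg
  refine ⟨x * c 0 + y * c 1, ?_⟩
  have hxy' : (x : ℝ) * (u 0 : ℝ) + (y : ℝ) * (u 1 : ℝ) = 1 := by exact_mod_cast congrArg (Int.cast : ℤ → ℝ) hxy
  push_cast
  linear_combination (x : ℝ) * h 0 + (y : ℝ) * h 1 - t * hxy'

noncomputable def lf (w u : Fin 2 → ℤ) : ℝ → EuclideanSpace ℝ (Fin 2) :=
  fun t => toE w + t • toE u

lemma lf_dist (w u : Fin 2 → ℤ) (s t : ℝ) :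
    dist (lf w u s) (lf w u t) = |s - t| * ‖toE u‖ := by
  rw [dist_eq_norm]
  have : lf w u s - lf w u t = (s - t) • toE u := by
    simp [lf, sub_smul]
  rw [this, norm_smul, Real.norm_eq_abs]

lemma toEu_ne (u : Fin 2 → ℤ) (hu : Finset.univ.gcd u = 1) : toE u ≠ 0 := by
  have hu0 : u ≠ 0 := by
    intro h
    rw [h, Finset.gcd_eq_zero_iff.mpr (by simp)] at hu
    exact absurd hu (by norm_num)
  obtain ⟨i, hi⟩ := Function.ne_iff.mp hu0
  intro h
  apply hi
  have h2 : ((u i : ℝ)) = 0 := by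
    have : toE u i = (0 : EuclideanSpace ℝ (Fin 2)) i := by rw [h]
    simpa [toE] using this
  exact_mod_cast h2

lemma lf_inj (w u : Fin 2 → ℤ) (h : toE u ≠ 0) : Function.Injective (lf w u) := by
  intro s t hst
  have h2 : (s - t) • toE u = 0 := by
    have : lf w u s - lf w u t = (s - t) • toE u := by simp [lf, sub_smul]
    rw [← this, hst, sub_self]
  rcases smul_eq_zero.mp h2 with h3 | h3
  · linarith [sub_eq_zero.mp (by exact h3)]
  · exact absurd h3 h

lemma uline_inter (P : Set (EuclideanSpace ℝ (Fin 2))) (w u : Fin 2 → ℤ) :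
    uline w u ∩ P = lf w u '' {t | lf w u t ∈ P} := by
  ext p
  constructor
  · rintro ⟨⟨t, rfl⟩, hp⟩
    exact ⟨t, hp, rfl⟩
  · rintro ⟨t, ht, rfl⟩
    exact ⟨⟨t, rfl⟩, ht⟩

lemma lf_int (w u : Fin 2 → ℤ) (n : ℤ) : lf w u (n : ℝ) = toE (w + n • u) := by
  ext i
  show (w i : ℝ) + (n : ℝ) * (u i : ℝ) = ((w i + n * u i : ℤ) : ℝ)
  push_cast
  ring

lemma lat_inter (P : Set (EuclideanSpace ℝ (Fin 2))) (w u : Fin 2 → ℤ)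
    (hu : Finset.univ.gcd u = 1) :
    uline w u ∩ P ∩ latE = lf w u '' ((fun n : ℤ => (n : ℝ)) '' {n : ℤ | lf w u (n : ℝ) ∈ P}) := by
  ext p
  constructor
  · rintro ⟨⟨⟨t, rfl⟩, hp⟩, y, hy⟩
    have hcoord : ∀ i, t * (u i : ℝ) = ((y i - w i : ℤ) : ℝ) := by
      intro i
      have := congrArg (fun p : EuclideanSpace ℝ (Fin 2) => p i) hy
      have h2 : (y i : ℝ) = (w i : ℝ) + t * (u i : ℝ) := by
        simpa [toE, lf] using this
      push_cast
      linarith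
    obtain ⟨n, rfl⟩ := prim_int u hu t _ hcoord
    exact ⟨(n : ℝ), ⟨n, hp, rfl⟩, rfl⟩
  · rintro ⟨x, ⟨n, hn, rfl⟩, rfl⟩
    exact ⟨⟨⟨(n : ℝ), rfl⟩, hn⟩, w + n • u, (lf_int w u n).symm⟩

lemma lf_cont (w u : Fin 2 → ℤ) : Continuous (lf w u) :=
  continuous_const.add (continuous_id.smul continuous_const)

lemma lS_convex (P : Set (EuclideanSpace ℝ (Fin 2))) (hPconv : Convex ℝ P)
    (w u : Fin 2 → ℤ) : Convex ℝ {t | lf w u t ∈ P} := by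
  intro s hs t ht c d hc hd hcd
  have hd' : d = 1 - c := by linarith
  subst hd'
  show lf w u (c • s + (1 - c) • t) ∈ P
  have : lf w u (c • s + (1 - c) • t) = c • lf w u s + (1 - c) • lf w u t := by
    simp only [lf, smul_eq_mul]
    module
  rw [this]
  exact hPconv hs ht hc hd hcd

lemma lS_compact (P : Set (EuclideanSpace ℝ (Fin 2))) (hPc : IsCompact P)
    (u : Fin 2 → ℤ) (hu : Finset.univ.gcd u = 1) (w : Fin 2 → ℤ) :
    IsCompact {t | lf w u t ∈ P} := by
  have hcl : IsClosed {t | lf w u t ∈ P} := hPc.isClosed.preimage (lf_cont w u)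
  obtain ⟨R, hR⟩ := hPc.isBounded.subset_closedBall 0
  have hnu : 0 < ‖toE u‖ := norm_pos_iff.mpr (toEu_ne u hu)
  set C := (R + ‖toE w‖) / ‖toE u‖ with hC
  refine IsCompact.of_isClosed_subset (isCompact_Icc (a := -C) (b := C)) hcl ?_
  intro t ht
  have h1 : ‖lf w u t‖ ≤ R := by
    have := hR ht
    rwa [Metric.mem_closedBall, dist_zero_right] at this
  have h2 : |t| * ‖toE u‖ ≤ R + ‖toE w‖ := by
    have heq : t • toE u = lf w u t - toE w := by simp [lf]
    have h3 : ‖t • toE u‖ ≤ ‖lf w u t‖ + ‖toE w‖ := by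
      rw [heq]; exact norm_sub_le _ _
    rw [norm_smul, Real.norm_eq_abs] at h3
    linarith
  have h4 : |t| ≤ C := (le_div_iff₀ hnu).mpr h2
  exact Set.mem_Icc.mpr (abs_le.mp h4)

open Metric in
lemma chord (P : Set (EuclideanSpace ℝ (Fin 2))) (hPc : IsCompact P) (hPconv : Convex ℝ P)
    (u : Fin 2 → ℤ) (hu : Finset.univ.gcd u = 1) (w : Fin 2 → ℤ)
    (hne : {t : ℝ | lf w u t ∈ P}.Nonempty) :
    ∃ a b : ℝ, a ≤ b ∧ {t : ℝ | lf w u t ∈ P} = Set.Icc a b ∧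
      (uline w u ∩ P ∩ latE).ncard = (Finset.Icc ⌈a⌉ ⌊b⌋).card ∧
      (b - a) * ‖toE u‖ ≤ Metric.diam (uline w u ∩ P) ∧
      Metric.diam (uline w u ∩ P) ≤ (b - a) * ‖toE u‖ := by
  set S := {t : ℝ | lf w u t ∈ P} with hS
  have hcpt : IsCompact S := lS_compact P hPc u hu w
  have hIcc : S = Set.Icc (sInf S) (sSup S) :=
    eq_Icc_of_connected_compact ⟨hne, (lS_convex P hPconv w u).isPreconnected⟩ hcpt
  set a := sInf S with ha'
  set b := sSup S with hb'
  have hab : a ≤ b := by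
    obtain ⟨t, ht⟩ := hne
    have : t ∈ Set.Icc a b := by rw [← hIcc]; exact ht
    linarith [this.1, this.2]
  have ha : a ∈ S := by rw [hIcc]; exact ⟨le_refl a, hab⟩
  have hb : b ∈ S := by rw [hIcc]; exact ⟨hab, le_refl b⟩
  refine ⟨a, b, hab, hIcc, ?_, ?_, ?_⟩
  · rw [lat_inter P w u hu,
      Set.ncard_image_of_injective _ (lf_inj w u (toEu_ne u hu)),
      Set.ncard_image_of_injective _
        (Int.cast_injective : Function.Injective (fun n : ℤ => (n : ℝ)))]
    have hNeq : {n : ℤ | lf w u (n : ℝ) ∈ P} = ↑(Finset.Icc ⌈a⌉ ⌊b⌋) := by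
      ext n
      simp only [Set.mem_setOf_eq, Finset.coe_Icc, Set.mem_Icc]
      constructor
      · intro hn
        have hmem : (n : ℝ) ∈ Set.Icc a b := by rw [← hIcc]; exact hn
        exact ⟨Int.ceil_le.mpr hmem.1, Int.le_floor.mpr hmem.2⟩
      · rintro ⟨h1, h2⟩
        have hmem : (n : ℝ) ∈ Set.Icc a b := ⟨Int.ceil_le.mp h1, Int.le_floor.mp h2⟩
        show lf w u (n : ℝ) ∈ P
        have : ((n : ℝ)) ∈ S := by rw [hIcc]; exact hmem
        exact this
    rw [hNeq, Set.ncard_coe_finset]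
  · rw [uline_inter P w u]
    have hbdd : Bornology.IsBounded (lf w u '' S) := (hcpt.image (lf_cont w u)).isBounded
    have hdab : (b - a) * ‖toE u‖ = dist (lf w u a) (lf w u b) := by
      rw [lf_dist, abs_of_nonpos (by linarith), neg_sub]
    rw [hdab]
    exact Metric.dist_le_diam_of_mem hbdd ⟨a, ha, rfl⟩ ⟨b, hb, rfl⟩
  · rw [uline_inter P w u]
    apply Metric.diam_le_of_forall_dist_le (mul_nonneg (by linarith) (norm_nonneg _))
    rintro p ⟨s, hs, rfl⟩ q ⟨t, ht, rfl⟩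
    rw [lf_dist]
    have hs' : s ∈ Set.Icc a b := by rw [← hIcc]; exact hs
    have ht' : t ∈ Set.Icc a b := by rw [← hIcc]; exact ht
    refine mul_le_mul_of_nonneg_right ?_ (norm_nonneg _)
    rw [abs_sub_le_iff]
    constructor <;> linarith [hs'.1, hs'.2, ht'.1, ht'.2]

/-- If a `u`-lattice line `L` passes through an extreme point of a
lattice polygon `P` and its chord `L ∩ P` has maximal Euclidean length among all
`u`-lattice lines, then `L` contains the most lattice points of `P` among all
`u`-lattice lines. -/
theorem stmt1 (V : Finset (Fin 2 → ℤ)) (P : Set (EuclideanSpace ℝ (Fin 2)))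
    (hP : P = convexHull ℝ (toE '' (V : Set (Fin 2 → ℤ))))
    (hdim : affineSpan ℝ P = ⊤)
    (u : Fin 2 → ℤ) (hu : Finset.univ.gcd u = 1)
    (z : Fin 2 → ℤ) (L : Set (EuclideanSpace ℝ (Fin 2))) (hL : L = uline z u)
    (hvert : ∃ v ∈ L, v ∈ Set.extremePoints ℝ P)
    (hmax : ∀ z' : Fin 2 → ℤ, Metric.diam (uline z' u ∩ P) ≤ Metric.diam (L ∩ P)) :
    ∀ z' : Fin 2 → ℤ, (uline z' u ∩ P ∩ latE).ncard ≤ (L ∩ P ∩ latE).ncard := by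

  classical
  subst hL
  have hPc : IsCompact P := by
    rw [hP]
    exact (V.finite_toSet.image toE).isCompact_convexHull ℝ
  have hPconv : Convex ℝ P := by rw [hP]; exact convex_convexHull ℝ _
  have hnu : 0 < ‖toE u‖ := norm_pos_iff.mpr (toEu_ne u hu)
  obtain ⟨v, hvL, hvext⟩ := hvert
  have hvP : v ∈ P := hvext.1
  have hvlat : v ∈ latE := by
    have hsub : v ∈ toE '' (V : Set (Fin 2 → ℤ)) := by
      rw [hP] at hvext
      exact extremePoints_convexHull_subset hvext
    obtain ⟨y, _, rfl⟩ := hsub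
    exact ⟨y, rfl⟩
  have hvmem : v ∈ uline z u ∩ P ∩ latE := ⟨⟨hvL, hvP⟩, hvlat⟩
  rw [lat_inter P z u hu] at hvmem
  obtain ⟨x, ⟨m, hmP, rfl⟩, hveq⟩ := hvmem
  have hne : {t : ℝ | lf z u t ∈ P}.Nonempty := ⟨(m : ℝ), hmP⟩
  obtain ⟨a, b, hab, hIcc, hcount, hdlo, hdhi⟩ := chord P hPc hPconv u hu z hne
  have hmab : (m : ℝ) ∈ Set.Icc a b := by rw [← hIcc]; exact hmP
  have haP : lf z u a ∈ P := by
    have : a ∈ Set.Icc a b := ⟨le_refl _, hab⟩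
    rw [← hIcc] at this; exact this
  have hbP : lf z u b ∈ P := by
    have : b ∈ Set.Icc a b := ⟨hab, le_refl _⟩
    rw [← hIcc] at this; exact this
  have hA : ∀ t : ℝ,
      (AffineMap.lineMap (toE z) (toE z + toE u) : ℝ →ᵃ[ℝ] EuclideanSpace ℝ (Fin 2)) t
        = lf z u t := by
    intro t
    rw [AffineMap.lineMap_apply_module]
    show (1 - t) • toE z + t • (toE z + toE u) = toE z + t • toE u
    module
  have hendpoint : (m : ℝ) = a ∨ (m : ℝ) = b := by
    by_contra hcon
    push_neg at hcon
    have hma : a < (m : ℝ) := lt_of_le_of_ne hmab.1 (fun h => hcon.1 h.symm)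
    have hmb : (m : ℝ) < b := lt_of_le_of_ne hmab.2 hcon.2
    have himg : lf z u '' openSegment ℝ a b = openSegment ℝ (lf z u a) (lf z u b) := by
      have h1 : lf z u '' openSegment ℝ a b
          = (AffineMap.lineMap (toE z) (toE z + toE u) : ℝ →ᵃ[ℝ] EuclideanSpace ℝ (Fin 2)) ''
              openSegment ℝ a b :=
        Set.image_congr fun t _ => (hA t).symm
      rw [h1, image_openSegment, hA, hA]
    have hseg : v ∈ openSegment ℝ (lf z u a) (lf z u b) := by
      rw [← hveq, ← himg]
      exact ⟨(m : ℝ), by rw [openSegment_eq_Ioo (lt_trans hma hmb)]; exact ⟨hma, hmb⟩, rfl⟩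
    have h1 := hvext.2 haP hbP hseg
    have : a = (m : ℝ) := lf_inj z u (toEu_ne u hu) (h1.trans hveq.symm)
    exact absurd this (ne_of_lt hma)
  intro z'
  by_cases hne' : {t : ℝ | lf z' u t ∈ P}.Nonempty
  · obtain ⟨a', b', hab', hIcc', hcount', hdlo', hdhi'⟩ := chord P hPc hPconv u hu z' hne'
    rw [hcount, hcount']
    have hdiam : b' - a' ≤ b - a := by
      have hchain : (b' - a') * ‖toE u‖ ≤ (b - a) * ‖toE u‖ :=
        hdlo'.trans ((hmax z').trans hdhi)
      exact le_of_mul_le_mul_right hchain hnu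
    have h1 : (⌊b'⌋ - ⌈a'⌉ : ℤ) ≤ ⌊b' - a'⌋ :=
      Int.le_floor.mpr (by push_cast; linarith [Int.floor_le b', Int.le_ceil a'])
    have h2 : ⌊b' - a'⌋ ≤ ⌊b - a⌋ := Int.floor_le_floor (by linarith)
    have h3 : ⌊b - a⌋ = ⌊b⌋ - ⌈a⌉ := by
      rcases hendpoint with hm | hm
      · rw [← hm, Int.floor_sub_intCast, Int.ceil_intCast]
      · rw [← hm, Int.floor_intCast]
        have heq : ((m : ℝ)) - a = ((m : ℤ) : ℝ) + (-a) := by ring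
        rw [heq, Int.floor_intCast_add, Int.floor_neg]
        ring
    rw [Int.card_Icc, Int.card_Icc]
    exact Int.toNat_le_toNat (by omega)
  · have hempty : uline z' u ∩ P ∩ latE = ∅ := by
      rw [lat_inter P z' u hu]
      have hN : {n : ℤ | lf z' u (n : ℝ) ∈ P} = ∅ := by
        ext n
        simp only [Set.mem_setOf_eq, Set.mem_empty_iff_false, iff_false]
        exact fun h => hne' ⟨(n : ℝ), h⟩
      rw [hN]
      simp
    rw [hempty]
    simp
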